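/- Let q, r, κ ∈ ℝ with q ≠ 0, r ≠ 0 and 1 + 2q ≥ 0, let ε ∈ {−1, 1}, and set s = √(1 + 2q). Let D be the Type B connection on U = {(x¹,x²) ∈ ℝ² : x¹ > 0} whose only possibly nonzero Christoffel symbols are Γ¹_{11} = (q + εs)/x¹, Γ²_{12} = Γ²_{21} = q/x¹ and Γ¹_{22} = r/x¹. Then the function h(x¹,x²) = κ + 2(εs − 1) ln x¹ satisfies the affine gradient Ricci soliton equation Hes_h(∂_i,∂_j) + 2ρ^{sym}_{ij} = 0 on U for all i,j ∈ {1,2}; moreover, if additionally εs ≠ 1, the symmetrized Ricci tensor ρ^{sym} is non-degenerate (rank two) at every point of U. -/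

import Mathlib

noncomputable section

/-- Points of the affine surface (local coordinates `(x¹,x²)`). -/
abbrev Pt2 := Fin 2 → ℝ

/-- Partial derivative `∂_{x^i}`. -/
def pd2 (i : Fin 2) (f : Pt2 → ℝ) (p : Pt2) : ℝ :=
  fderiv ℝ f p (Pi.single i 1)

/-- The Ricci tensor `ρ_{ij}` of the affine connection with Christoffel symbols `Γ^k_{ij}`:
`ρ_{ij} = Σ_k ∂_{x^k}Γ^k_{ij} − ∂_{x^i}(Σ_k Γ^k_{kj}) + Σ_{k,l}(Γ^k_{kl}Γ^l_{ij} − Γ^k_{il}Γ^l_{kj})`. -/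
def ricciD (Γ : Fin 2 → Fin 2 → Fin 2 → Pt2 → ℝ) (i j : Fin 2) (p : Pt2) : ℝ :=
  (∑ k : Fin 2, pd2 k (Γ k i j) p) - pd2 i (fun q => ∑ k : Fin 2, Γ k k j q) p
    + ∑ k : Fin 2, ∑ l : Fin 2, (Γ k k l p * Γ l i j p - Γ k i l p * Γ l k j p)

/-- The symmetric part `ρ^{sym}_{ij} = ½(ρ_{ij}+ρ_{ji})` of the Ricci tensor. -/
def ricciDSym (Γ : Fin 2 → Fin 2 → Fin 2 → Pt2 → ℝ) (i j : Fin 2) (p : Pt2) : ℝ :=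
  (ricciD Γ i j p + ricciD Γ j i p) / 2

/-- The affine Hessian `Hes_h(∂_i,∂_j) = ∂_i∂_j h − Σ_k Γ^k_{ij} ∂_k h`. -/
def hessD (Γ : Fin 2 → Fin 2 → Fin 2 → Pt2 → ℝ) (h : Pt2 → ℝ) (i j : Fin 2) (p : Pt2) : ℝ :=
  pd2 i (pd2 j h) p - ∑ k : Fin 2, Γ k i j p * pd2 k h p

/-- The covariant derivative of the Ricci tensor:
`(D_{∂_i}ρ)_{jk} = ∂_i ρ_{jk} − Σ_l Γ^l_{ij} ρ_{lk} − Σ_l Γ^l_{ik} ρ_{jl}`. -/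
def covRicciD (Γ : Fin 2 → Fin 2 → Fin 2 → Pt2 → ℝ) (i j k : Fin 2) (p : Pt2) : ℝ :=
  pd2 i (fun q => ricciD Γ j k q) p - (∑ l : Fin 2, Γ l i j p * ricciD Γ l k p)
    - ∑ l : Fin 2, Γ l i k p * ricciD Γ j l p

/-- The Type B connection with `Γ¹_{11} = (q+εs)/x¹`, `Γ²_{12} = Γ²_{21} = q/x¹`,
`Γ¹_{22} = r/x¹` and all other Christoffel symbols zero. -/
def ΓB3 (q r e s : ℝ) : Fin 2 → Fin 2 → Fin 2 → Pt2 → ℝ := fun k i j x =>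
  if k = 0 ∧ i = 0 ∧ j = 0 then (q + e * s) / x 0
  else if k = 1 ∧ ((i = 0 ∧ j = 1) ∨ (i = 1 ∧ j = 0)) then q / x 0
  else if k = 0 ∧ i = 1 ∧ j = 1 then r / x 0
  else 0


section Aux

lemma pd2_congr {f g : Pt2 → ℝ} {p : Pt2} (hfg : f =ᶠ[nhds p] g) (i : Fin 2) :
    pd2 i f p = pd2 i g p := by
  unfold pd2; rw [Filter.EventuallyEq.fderiv_eq hfg]

lemma pd2_const (c : ℝ) (i : Fin 2) (p : Pt2) : pd2 i (fun _ => c) p = 0 := by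
  simp [pd2]

lemma single_eval (i : Fin 2) : (Pi.single i 1 : Pt2) 0 = if i = 0 then 1 else 0 := by
  fin_cases i <;> simp [Pi.single, Function.update]

lemma pd2_cdiv (c : ℝ) (i : Fin 2) (p : Pt2) (hp : p 0 ≠ 0) :
    pd2 i (fun x => c / x 0) p = if i = 0 then -c / p 0 ^ 2 else 0 := by
  have hL : HasFDerivAt (fun x : Pt2 => x 0)
      (ContinuousLinearMap.proj 0 : Pt2 →L[ℝ] ℝ) p :=
    (ContinuousLinearMap.proj (R := ℝ) (φ := fun _ : Fin 2 => ℝ) 0).hasFDerivAt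
  have hd : HasDerivAt (fun t : ℝ => c / t) (-c / p 0 ^ 2) (p 0) := by
    have := (hasDerivAt_inv hp).const_mul c
    have heq : (fun t : ℝ => c / t) = fun t : ℝ => c * t⁻¹ := by
      funext t; rw [div_eq_mul_inv]
    rw [heq]
    exact this.congr_deriv (by ring)
  have hF : HasFDerivAt (fun x : Pt2 => c / x 0)
      ((-c / p 0 ^ 2) • (ContinuousLinearMap.proj 0 : Pt2 →L[ℝ] ℝ)) p :=
    hd.comp_hasFDerivAt p hL
  unfold pd2
  rw [hF.fderiv]
  simp only [ContinuousLinearMap.coe_smul', Pi.smul_apply,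
    ContinuousLinearMap.proj_apply, single_eval, smul_eq_mul]
  split_ifs <;> ring

lemma pd2_logfun (κ c : ℝ) (i : Fin 2) (p : Pt2) (hp : 0 < p 0) :
    pd2 i (fun x : Pt2 => κ + c * Real.log (x 0)) p = if i = 0 then c / p 0 else 0 := by
  have hL : HasFDerivAt (fun x : Pt2 => x 0)
      (ContinuousLinearMap.proj 0 : Pt2 →L[ℝ] ℝ) p :=
    (ContinuousLinearMap.proj (R := ℝ) (φ := fun _ : Fin 2 => ℝ) 0).hasFDerivAt
  have hd : HasDerivAt (fun t : ℝ => κ + c * Real.log t) (c / p 0) (p 0) := by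
    have := ((Real.hasDerivAt_log hp.ne').const_mul c).const_add κ
    exact this.congr_deriv (by ring)
  have hF : HasFDerivAt (fun x : Pt2 => κ + c * Real.log (x 0))
      ((c / p 0) • (ContinuousLinearMap.proj 0 : Pt2 →L[ℝ] ℝ)) p :=
    hd.comp_hasFDerivAt (f := fun x : Pt2 => x 0) p hL
  unfold pd2
  rw [hF.fderiv]
  simp only [ContinuousLinearMap.coe_smul', Pi.smul_apply,
    ContinuousLinearMap.proj_apply, single_eval, smul_eq_mul]
  split_ifs <;> ring

/-- Christoffel coefficients of `ΓB3` (the numerators over `x¹`). -/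
def cc3 (q r e s : ℝ) : Fin 2 → Fin 2 → Fin 2 → ℝ := fun k i j =>
  if k = 0 ∧ i = 0 ∧ j = 0 then q + e * s
  else if k = 1 ∧ ((i = 0 ∧ j = 1) ∨ (i = 1 ∧ j = 0)) then q
  else if k = 0 ∧ i = 1 ∧ j = 1 then r
  else 0

lemma ΓB3_eq (q r e s : ℝ) (k i j : Fin 2) :
    ΓB3 q r e s k i j = fun x => cc3 q r e s k i j / x 0 := by
  funext x; simp only [ΓB3, cc3]; split_ifs <;> simp

lemma ric_val (q r e s : ℝ) (i j : Fin 2) (p : Pt2) (hp : p 0 ≠ 0) :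
    ricciD (ΓB3 q r e s) i j p =
      (if i = 0 ∧ j = 0 then q * (1 + e * s)
       else if i = 1 ∧ j = 1 then r * (e * s - 1) else 0) / p 0 ^ 2 := by
  unfold ricciD
  fin_cases i <;> fin_cases j <;>
    · simp only [Fin.sum_univ_two, ΓB3_eq, cc3, Fin.isValue, ← add_div]
      norm_num
      simp only [pd2_cdiv _ _ _ hp, pd2_const]
      try norm_num
      try field_simp
      try ring

end Aux

/-- For `q ≠ 0`, `r ≠ 0`, `1 + 2q ≥ 0`, `ε = ±1` and `s = √(1+2q)`,
the function `h = κ + 2(εs − 1) ln x¹` is an affine gradient Ricci soliton potential for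
the Type B connection `ΓB3` on `{x¹ > 0}`; if moreover `εs ≠ 1`, the symmetrized Ricci
tensor is non-degenerate (rank two) at every point. -/
theorem stmt14 (q r κ e : ℝ) (hq : q ≠ 0) (hr : r ≠ 0) (hpos : 0 ≤ 1 + 2 * q)
    (he : e = 1 ∨ e = -1) (s : ℝ) (hs : s = Real.sqrt (1 + 2 * q))
    (h : Pt2 → ℝ) (hdef : h = fun x : Pt2 => κ + 2 * (e * s - 1) * Real.log (x 0)) :
    (∀ x : Pt2, 0 < x 0 → ∀ i j : Fin 2,
        hessD (ΓB3 q r e s) h i j x + 2 * ricciDSym (ΓB3 q r e s) i j x = 0) ∧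
    (e * s ≠ 1 → ∀ x : Pt2, 0 < x 0 →
        ricciDSym (ΓB3 q r e s) 0 0 x * ricciDSym (ΓB3 q r e s) 1 1 x
          - ricciDSym (ΓB3 q r e s) 0 1 x * ricciDSym (ΓB3 q r e s) 1 0 x ≠ 0) := by
  have he2 : e * e = 1 := by rcases he with h1 | h1 <;> rw [h1] <;> norm_num
  have hss : s * s = 1 + 2 * q := by rw [hs]; exact Real.mul_self_sqrt hpos
  have hsq : e * s * (e * s) = 1 + 2 * q := by
    calc e * s * (e * s) = (e * e) * (s * s) := by ring
    _ = 1 + 2 * q := by rw [he2, hss, one_mul]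
  constructor
  · intro x hx i j
    have hp : x 0 ≠ 0 := hx.ne'
    have hpd : ∀ k : Fin 2, ∀ y : Pt2, 0 < y 0 →
        pd2 k h y = (if k = 0 then 2 * (e * s - 1) else 0) / y 0 := by
      intro k y hy
      rw [hdef, pd2_logfun _ _ _ _ hy]
      split_ifs <;> simp
    have hEv : pd2 j h =ᶠ[nhds x]
        fun y => (if j = 0 then 2 * (e * s - 1) else 0) / y 0 := by
      have hopen : IsOpen {y : Pt2 | 0 < y 0} :=
        isOpen_lt continuous_const (continuous_apply 0)
      exact Filter.eventuallyEq_of_mem (hopen.mem_nhds hx) fun y hy => hpd j y hy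
    unfold hessD ricciDSym
    rw [pd2_congr hEv i, pd2_cdiv _ _ _ hp, ric_val q r e s i j x hp,
      ric_val q r e s j i x hp]
    simp only [Fin.sum_univ_two, ΓB3_eq, hpd 0 x hx, hpd 1 x hx]
    fin_cases i <;> fin_cases j <;>
      · simp only [cc3, Fin.isValue]
        norm_num
        try field_simp
        try linear_combination (-2) * hsq
        try ring
  · intro _ x hx
    have hp : x 0 ≠ 0 := hx.ne'
    have h2q : (1 + e * s) * (e * s - 1) = 2 * q := by linear_combination hsq
    have f1 : 1 + e * s ≠ 0 := by
      intro h0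
      apply hq
      have : (2 : ℝ) * q = 0 := by rw [← h2q, h0, zero_mul]
      linarith
    have f2 : e * s - 1 ≠ 0 := by
      intro h0
      apply hq
      have : (2 : ℝ) * q = 0 := by rw [← h2q, h0, mul_zero]
      linarith
    unfold ricciDSym
    rw [ric_val q r e s 0 0 x hp, ric_val q r e s 1 1 x hp,
      ric_val q r e s 0 1 x hp, ric_val q r e s 1 0 x hp]
    norm_num
    exact ⟨⟨⟨hq, f1⟩, hp⟩, ⟨hr, f2⟩, hp⟩


end
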